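/- For every fixed s in (0,1), the function t ↦ (sin(ts/2) - (ts/2)cos(ts/2))/(sin(t/2) - (t/2)cos(t/2)) is monotone increasing on (0, 2π). -/

import Mathlib

open Real Set

noncomputable def gg (x : ℝ) : ℝ := Real.sin x - x * Real.cos x

lemma gg_hasDerivAt (x : ℝ) : HasDerivAt gg (x * Real.sin x) x := by
  have h2 : HasDerivAt (fun y : ℝ => y * Real.cos y)
      (1 * Real.cos x + x * (-Real.sin x)) x :=
    (hasDerivAt_id x).mul (Real.hasDerivAt_cos x)
  have := (Real.hasDerivAt_sin x).sub h2
  refine this.congr_deriv ?_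
  ring

/-- helper: f 0 = 0, deriv nonneg on (0,b) gives nonneg on [0,b] -/
lemma nonneg_of_deriv_nonneg {f f' : ℝ → ℝ} {b : ℝ}
    (hf : ∀ x, HasDerivAt f (f' x) x) (h0 : f 0 = 0)
    (hd : ∀ x ∈ Set.Ioo (0:ℝ) b, 0 ≤ f' x) :
    ∀ x ∈ Set.Icc (0:ℝ) b, 0 ≤ f x := by
  intro x hx
  have hm : MonotoneOn f (Set.Icc 0 b) := by
    apply monotoneOn_of_hasDerivWithinAt_nonneg (convex_Icc 0 b)
      (fun y _ => (hf y).continuousAt.continuousWithinAt)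
      (f' := f')
    · intro y hy
      exact (hf y).hasDerivWithinAt
    · intro y hy
      rw [interior_Icc] at hy
      exact hd y hy
  have hb : (0:ℝ) ≤ b := le_trans hx.1 hx.2
  have := hm (Set.mem_Icc.2 ⟨le_refl 0, hb⟩) hx hx.1
  linarith [h0 ▸ this]

lemma gg_nonneg {x : ℝ} (hx : x ∈ Set.Icc (0:ℝ) π) : 0 ≤ gg x := by
  refine nonneg_of_deriv_nonneg gg_hasDerivAt ?_ ?_ x hx
  · simp [gg]
  · intro y hy
    have := Real.sin_nonneg_of_nonneg_of_le_pi hy.1.le hy.2.le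
    exact mul_nonneg hy.1.le this

lemma gg_pos {x : ℝ} (hx : x ∈ Set.Ioo (0:ℝ) π) : 0 < gg x := by
  have hm : StrictMonoOn gg (Set.Icc 0 π) := by
    apply strictMonoOn_of_deriv_pos (convex_Icc 0 π)
      (fun y _ => (gg_hasDerivAt y).continuousAt.continuousWithinAt)
    intro y hy
    rw [interior_Icc] at hy
    rw [(gg_hasDerivAt y).deriv]
    have := Real.sin_pos_of_pos_of_lt_pi hy.1 hy.2
    exact mul_pos hy.1 this
  have := hm (Set.mem_Icc.2 ⟨le_refl 0, Real.pi_pos.le⟩)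
    (Set.mem_Icc.2 ⟨hx.1.le, hx.2.le⟩) hx.1
  simpa [gg] using this

/-- p2 u = 2 - 2 cos u - u sin u ≥ 0 on [0, 2π] -/
lemma p2_nonneg {u : ℝ} (hu : u ∈ Set.Icc (0:ℝ) (2 * π)) :
    0 ≤ 2 - 2 * Real.cos u - u * Real.sin u := by
  rcases le_or_gt u π with h | h
  · have := nonneg_of_deriv_nonneg (f := fun u => 2 - 2 * Real.cos u - u * Real.sin u)
      (f' := fun u => gg u) (b := π) ?_ ?_ ?_ u ⟨hu.1, h⟩
    · exact this
    · intro y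
      have h1 : HasDerivAt (fun y : ℝ => y * Real.sin y)
          (1 * Real.sin y + y * Real.cos y) y :=
        (hasDerivAt_id y).mul (Real.hasDerivAt_sin y)
      have h2 : HasDerivAt (fun y : ℝ => 2 - 2 * Real.cos y) (2 * Real.sin y) y := by
        have := ((Real.hasDerivAt_cos y).const_mul (2:ℝ)).const_sub (2:ℝ)
        refine this.congr_deriv ?_; ring
      have := h2.sub h1
      refine this.congr_deriv ?_
      simp [gg]; ring
    · simp
    · intro y hy
      exact gg_nonneg ⟨hy.1.le, hy.2.le⟩
  · have hsin : Real.sin u ≤ 0 := by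
      have h1 : Real.sin (u - π) = -Real.sin u := Real.sin_sub_pi u
      have h2 : 0 ≤ Real.sin (u - π) :=
        Real.sin_nonneg_of_nonneg_of_le_pi (by linarith) (by linarith [hu.2])
      linarith [h1 ▸ h2]
    have hcos : Real.cos u ≤ 1 := Real.cos_le_one u
    have hu0 : 0 ≤ u := hu.1
    nlinarith
/-- p1 u = 2u - 3 sin u + u cos u ≥ 0 on [0, 2π] -/
lemma p1_nonneg {u : ℝ} (hu : u ∈ Set.Icc (0:ℝ) (2 * π)) :
    0 ≤ 2 * u - 3 * Real.sin u + u * Real.cos u := by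
  refine nonneg_of_deriv_nonneg (f := fun u => 2 * u - 3 * Real.sin u + u * Real.cos u)
    (f' := fun u => 2 - 2 * Real.cos u - u * Real.sin u) ?_ ?_ ?_ u hu
  · intro y
    have h1 : HasDerivAt (fun y : ℝ => 2 * y) 2 y := by
      simpa using (hasDerivAt_id y).const_mul (2:ℝ)
    have h2 : HasDerivAt (fun y : ℝ => 3 * Real.sin y) (3 * Real.cos y) y :=
      (Real.hasDerivAt_sin y).const_mul 3
    have h3 : HasDerivAt (fun y : ℝ => y * Real.cos y)
        (1 * Real.cos y + y * (-Real.sin y)) y :=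
      (hasDerivAt_id y).mul (Real.hasDerivAt_cos y)
    have := (h1.sub h2).add h3
    refine this.congr_deriv ?_
    ring
  · simp
  · intro y hy
    exact p2_nonneg ⟨hy.1.le, hy.2.le⟩

/-- p0 u = u² + u sin u + 4 cos u - 4 ≥ 0 on [0, 2π] -/
lemma p0_nonneg {u : ℝ} (hu : u ∈ Set.Icc (0:ℝ) (2 * π)) :
    0 ≤ u ^ 2 + u * Real.sin u + 4 * Real.cos u - 4 := by
  refine nonneg_of_deriv_nonneg
    (f := fun u => u ^ 2 + u * Real.sin u + 4 * Real.cos u - 4)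
    (f' := fun u => 2 * u - 3 * Real.sin u + u * Real.cos u) ?_ ?_ ?_ u hu
  · intro y
    have h1 : HasDerivAt (fun y : ℝ => y ^ 2) (2 * y) y := by
      simpa using hasDerivAt_pow 2 y
    have h2 : HasDerivAt (fun y : ℝ => y * Real.sin y)
        (1 * Real.sin y + y * Real.cos y) y :=
      (hasDerivAt_id y).mul (Real.hasDerivAt_sin y)
    have h3 : HasDerivAt (fun y : ℝ => 4 * Real.cos y) (4 * -Real.sin y) y :=
      (Real.hasDerivAt_cos y).const_mul 4
    have := ((h1.add h2).add h3).sub_const 4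
    refine this.congr_deriv ?_
    ring
  · simp
  · intro y hy
    exact p1_nonneg ⟨hy.1.le, hy.2.le⟩

/-- key: x² - 2 sin²x + x sin x cos x ≥ 0 for x ∈ [0, π] -/
lemma keyN_nonneg {x : ℝ} (hx : x ∈ Set.Icc (0:ℝ) π) :
    0 ≤ x ^ 2 - 2 * Real.sin x ^ 2 + x * Real.sin x * Real.cos x := by
  have h := p0_nonneg (u := 2 * x) ⟨by linarith [hx.1], by linarith [hx.2]⟩
  rw [Real.sin_two_mul, Real.cos_two_mul'] at h
  nlinarith [Real.sin_sq_add_cos_sq x]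

/-- q x = gg x / (x² sin x) is monotone on (0, π) -/
lemma q_mono : MonotoneOn (fun x : ℝ => gg x / (x ^ 2 * Real.sin x)) (Set.Ioo 0 π) := by
  have hderiv : ∀ x ∈ Set.Ioo (0:ℝ) π,
      HasDerivAt (fun x : ℝ => gg x / (x ^ 2 * Real.sin x))
        (x * (x ^ 2 - 2 * Real.sin x ^ 2 + x * Real.sin x * Real.cos x) /
          (x ^ 2 * Real.sin x) ^ 2) x := by
    intro x hx
    have hsin : 0 < Real.sin x := Real.sin_pos_of_pos_of_lt_pi hx.1 hx.2
    have hd : x ^ 2 * Real.sin x ≠ 0 := (mul_pos (pow_pos hx.1 2) hsin).ne'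
    have h1 : HasDerivAt (fun y : ℝ => y ^ 2 * Real.sin y)
        (2 * x * Real.sin x + x ^ 2 * Real.cos x) x := by
      have := (by simpa using hasDerivAt_pow 2 x : HasDerivAt (fun y : ℝ => y ^ 2) (2 * x) x).mul
        (Real.hasDerivAt_sin x)
      exact this
    have := (gg_hasDerivAt x).div h1 hd
    refine this.congr_deriv ?_
    congr 1
    simp only [gg]
    linear_combination (x^3) * Real.sin_sq_add_cos_sq x
  apply monotoneOn_of_hasDerivWithinAt_nonneg (convex_Ioo 0 π)
    (f' := fun x => x * (x ^ 2 - 2 * Real.sin x ^ 2 + x * Real.sin x * Real.cos x) /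
      (x ^ 2 * Real.sin x) ^ 2)
  · intro y hy
    exact (hderiv y hy).continuousAt.continuousWithinAt
  · intro y hy
    rw [interior_Ioo] at hy ⊢
    exact (hderiv y hy).hasDerivWithinAt
  · intro y hy
    rw [interior_Ioo] at hy
    have h1 := keyN_nonneg (x := y) ⟨hy.1.le, hy.2.le⟩
    exact div_nonneg (mul_nonneg hy.1.le h1) (sq_nonneg _)

theorem d2_ratio_monotone (s : ℝ) (hs : s ∈ Set.Ioo (0:ℝ) 1) :
    MonotoneOn (fun t : ℝ =>
        (Real.sin (t * s / 2) - t * s / 2 * Real.cos (t * s / 2)) /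
          (Real.sin (t / 2) - t / 2 * Real.cos (t / 2)))
      (Set.Ioo 0 (2 * π)) := by
  obtain ⟨hs0, hs1⟩ := hs
  have hpi := Real.pi_pos
  -- the function is g(ts/2)/g(t/2)
  have hderiv : ∀ t ∈ Set.Ioo (0:ℝ) (2 * π),
      HasDerivAt (fun t : ℝ => gg (t * s / 2) / gg (t / 2))
        ((s / 2 * (t * s / 2 * Real.sin (t * s / 2)) * gg (t / 2) -
          gg (t * s / 2) * (1 / 2 * (t / 2 * Real.sin (t / 2)))) / gg (t / 2) ^ 2) t := by
    intro t ht
    have ht2 : t / 2 ∈ Set.Ioo (0:ℝ) π := ⟨by linarith [ht.1], by linarith [ht.2]⟩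
    have hd : gg (t / 2) ≠ 0 := (gg_pos ht2).ne'
    have h1 : HasDerivAt (fun t : ℝ => gg (t * s / 2))
        (s / 2 * (t * s / 2 * Real.sin (t * s / 2))) t := by
      have hid : HasDerivAt (fun t : ℝ => t * s / 2) (s / 2) t := by
        simpa using ((hasDerivAt_id t).mul_const s).div_const 2
      have := (gg_hasDerivAt (t * s / 2)).comp t hid
      refine this.congr_deriv ?_; ring
    have h2 : HasDerivAt (fun t : ℝ => gg (t / 2))
        (1 / 2 * (t / 2 * Real.sin (t / 2))) t := by
      have hid : HasDerivAt (fun t : ℝ => t / 2) (1 / 2) t := by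
        simpa using (hasDerivAt_id t).div_const 2
      have := (gg_hasDerivAt (t / 2)).comp t hid
      refine this.congr_deriv ?_; ring
    exact h1.div h2 hd
  have hmono : MonotoneOn (fun t : ℝ => gg (t * s / 2) / gg (t / 2)) (Set.Ioo 0 (2 * π)) := by
    apply monotoneOn_of_hasDerivWithinAt_nonneg (convex_Ioo 0 (2 * π))
      (f' := fun t => (s / 2 * (t * s / 2 * Real.sin (t * s / 2)) * gg (t / 2) -
          gg (t * s / 2) * (1 / 2 * (t / 2 * Real.sin (t / 2)))) / gg (t / 2) ^ 2)
    · intro t ht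
      exact (hderiv t ht).continuousAt.continuousWithinAt
    · intro t ht
      rw [interior_Ioo] at ht ⊢
      exact (hderiv t ht).hasDerivWithinAt
    · intro t ht
      rw [interior_Ioo] at ht
      set a := t / 2 with ha
      set b := t * s / 2 with hb
      have ha2 : a ∈ Set.Ioo (0:ℝ) π := ⟨by simp [ha]; linarith [ht.1], by simp [ha]; linarith [ht.2]⟩
      have hb2 : b ∈ Set.Ioo (0:ℝ) π := by
        constructor
        · simp only [hb]
          exact div_pos (mul_pos ht.1 hs0) two_pos
        · have h1 : b < a := by
            rw [hb, ha]
            have := ht.1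
            rw [div_lt_div_iff₀ (by norm_num) (by norm_num)]
            nlinarith
          linarith [ha2.2]
      have hba : b ≤ a := by
        rw [hb, ha]
        have := ht.1
        rw [div_le_div_iff₀ (by norm_num) (by norm_num)]
        nlinarith
      have hq := q_mono hb2 ha2 hba
      simp only at hq
      have hsa : 0 < Real.sin a := Real.sin_pos_of_pos_of_lt_pi ha2.1 ha2.2
      have hsb : 0 < Real.sin b := Real.sin_pos_of_pos_of_lt_pi hb2.1 hb2.2
      have hga : 0 < gg a := gg_pos ha2
      have hgb : 0 ≤ gg b := gg_nonneg ⟨hb2.1.le, hb2.2.le⟩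
      -- from hq : gg b / (b² sin b) ≤ gg a / (a² sin a)
      have hkey : gg b * (a ^ 2 * Real.sin a) ≤ gg a * (b ^ 2 * Real.sin b) := by
        have hb2' : (0:ℝ) < b ^ 2 * Real.sin b := mul_pos (pow_pos hb2.1 2) hsb
        have ha2' : (0:ℝ) < a ^ 2 * Real.sin a := mul_pos (pow_pos ha2.1 2) hsa
        exact (div_le_div_iff₀ hb2' ha2').1 hq
      -- b = a * s
      have hab : b = a * s := by rw [hb, ha]; ring
      have ha2pos : (0:ℝ) < a ^ 2 := pow_pos ha2.1 2
      have hbsq : b ^ 2 = a ^ 2 * s ^ 2 := by rw [hab]; ring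
      have h5 : gg a * (b ^ 2 * Real.sin b) = a ^ 2 * (s ^ 2 * Real.sin b * gg a) := by
        rw [hbsq]; ring
      have h6 : gg b * (a ^ 2 * Real.sin a) = a ^ 2 * (Real.sin a * gg b) := by ring
      rw [h5, h6] at hkey
      have hkey2 : Real.sin a * gg b ≤ s ^ 2 * Real.sin b * gg a :=
        (mul_le_mul_iff_right₀ ha2pos).1 hkey
      apply div_nonneg _ (sq_nonneg _)
      have expand : s / 2 * (b * Real.sin b) * gg a - gg b * (1 / 2 * (a * Real.sin a))
          = a / 2 * (s ^ 2 * Real.sin b * gg a - Real.sin a * gg b) := by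
        rw [hab]; ring
      rw [expand]
      exact mul_nonneg (by linarith [ha2.1]) (by linarith)
  -- conclude
  intro x hx y hy hxy
  have := hmono hx hy hxy
  simpa [gg] using this
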